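/- Let t ≥ 1 and let V_1,…,V_t be nonempty sets, with V = V_1 × ⋯ × V_t. Let M ⊆ V with |M| = m and m ≤ t. Then there exist pairwise disjoint sets H_1,…,H_m ⊆ V, each of the form H_j = {v ∈ V : v_i = a^j_i for all i ∈ S_j} for some index set S_j ⊆ [t] with |S_j| ≤ m − 1 and fixed elements a^j_i ∈ V_i (i ∈ S_j), such that every element of M lies in exactly one of H_1,…,H_m and each H_j contains exactly one element of M. -/

import Mathlib

open Finset

variable {V : Type*}

/-- The number of neighbours of `v` in `G`. -/
noncomputable def degAt (G : SimpleGraph V) (v : V) : ℕ := {w | G.Adj v w}.ncard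

/-- `G` is `d`-regular. -/
def IsRegOfDeg (G : SimpleGraph V) (d : ℕ) : Prop := ∀ v, degAt G v = d

/-- The order (number of vertices) of the connected component of `v` in `H`. -/
noncomputable def compCard (H : SimpleGraph V) (v : V) : ℕ := {w | H.Reachable v w}.ncard

/-- The order of the largest connected component of `H`. -/
noncomputable def maxCompCard [Fintype V] (H : SimpleGraph V) : ℕ :=
  Finset.univ.sup (compCard H)

/-- The edge set of `G` as a `Finset`. -/
noncomputable def edgeFins (G : SimpleGraph V) [Fintype V] : Finset (Sym2 V) :=
  G.edgeSet.toFinite.toFinset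

open Classical in
/-- The probability of the event `A` under bond percolation on `G` with retention
probability `p`: each edge of `G` is retained independently with probability `p`. -/
noncomputable def percProb [Fintype V] (G : SimpleGraph V) (p : ℝ)
    (A : SimpleGraph V → Prop) : ℝ :=
  ∑ F ∈ (edgeFins G).powerset,
    if A (SimpleGraph.fromEdgeSet (↑F)) then
      p ^ F.card * (1 - p) ^ ((edgeFins G).card - F.card) else 0

open Classical in
/-- Percolation expectation of an ℝ-valued observable. -/
noncomputable def percExp [Fintype V] (G : SimpleGraph V) (p : ℝ)
    (X : SimpleGraph V → ℝ) : ℝ :=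
  ∑ F ∈ (edgeFins G).powerset,
    p ^ F.card * (1 - p) ^ ((edgeFins G).card - F.card) *
      X (SimpleGraph.fromEdgeSet (↑F))

open Classical in
/-- The probability of the event `A` under three independent bond percolations on `G`
with retention probabilities `p₁, p₂, p₃`. -/
noncomputable def percProb3 [Fintype V] (G : SimpleGraph V) (p₁ p₂ p₃ : ℝ)
    (A : SimpleGraph V → SimpleGraph V → SimpleGraph V → Prop) : ℝ :=
  ∑ F₁ ∈ (edgeFins G).powerset, ∑ F₂ ∈ (edgeFins G).powerset, ∑ F₃ ∈ (edgeFins G).powerset,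
    if A (SimpleGraph.fromEdgeSet (↑F₁)) (SimpleGraph.fromEdgeSet (↑F₂))
        (SimpleGraph.fromEdgeSet (↑F₃)) then
      (p₁ ^ F₁.card * (1 - p₁) ^ ((edgeFins G).card - F₁.card)) *
      (p₂ ^ F₂.card * (1 - p₂) ^ ((edgeFins G).card - F₂.card)) *
      (p₃ ^ F₃.card * (1 - p₃) ^ ((edgeFins G).card - F₃.card))
    else 0

/-- The Cartesian product of the graphs `Gs i`, `i : Fin t`. -/
def prodGraph {t : ℕ} {V : Fin t → Type*} (Gs : ∀ i, SimpleGraph (V i)) :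
    SimpleGraph (∀ i, V i) where
  Adj u v := ∃ i, (Gs i).Adj (u i) (v i) ∧ ∀ j, j ≠ i → u j = v j
  symm := by
    constructor
    rintro u v ⟨i, hadj, h⟩
    exact ⟨i, hadj.symm, fun j hj => (h j hj).symm⟩
  loopless := by
    constructor
    rintro u ⟨i, hadj, -⟩
    exact hadj.ne rfl

/-- the projection lemma. Any set `M` of at most `t` points in a product
`V_1 × ⋯ × V_t` can be covered by `|M|` pairwise disjoint "projections" (sets obtained
by fixing at most `|M| - 1` coordinates), each containing exactly one point of `M`. -/
theorem stmt_3 (t : ℕ) (ht : 1 ≤ t) (V : Fin t → Type) (hne : ∀ i, Nonempty (V i))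
    (M : Set (∀ i, V i)) (hMfin : M.Finite) (m : ℕ) (hm : M.ncard = m) (hmt : m ≤ t) :
    ∃ H : Fin m → Set (∀ i, V i),
      (∀ j k, j ≠ k → Disjoint (H j) (H k)) ∧
      (∀ j, ∃ (S : Finset (Fin t)) (a : ∀ i, V i),
        S.card ≤ m - 1 ∧ H j = {v | ∀ i ∈ S, v i = a i}) ∧
      (∀ v ∈ M, ∃! j, v ∈ H j) ∧
      (∀ j, ∃! v, v ∈ M ∧ v ∈ H j) := by
  classical
  haveI : Fintype M := hMfin.fintype
  have hcard : Fintype.card M = m := by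
    rw [← Set.toFinset_card, ← Set.ncard_eq_toFinset_card', hm]
  let e : M ≃ Fin m := Fintype.equivFinOfCardEq hcard
  let w : Fin m → (∀ i, V i) := fun j => (e.symm j : M)
  have hwM : ∀ j, w j ∈ M := fun j => (e.symm j).2
  have hwinj : Function.Injective w := fun j k h => by
    have := Subtype.ext (p := fun x => x ∈ M) h
    simpa using e.symm.injective this
  have hd : ∀ j k : Fin m, j ≠ k → ∃ i, w j i ≠ w k i := by
    intro j k hjk
    by_contra h
    push_neg at h
    exact hjk (hwinj (funext h))
  let d : Fin m → Fin m → Fin t := fun j k =>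
    if h : j ≠ k then (hd j k h).choose else ⟨0, ht⟩
  have hdne : ∀ j k (h : j ≠ k), w j (d j k) ≠ w k (d j k) := by
    intro j k h
    rw [show d j k = (hd j k h).choose from dif_pos h]
    exact (hd j k h).choose_spec
  let s : Fin m → Fin m → Fin t := fun j k => if j ≤ k then d j k else d k j
  have hssymm : ∀ j k, s j k = s k j := by
    intro j k
    simp only [s]
    rcases le_total j k with h | h
    · rcases eq_or_ne j k with rfl | hne
      · simp
      · rw [if_pos h, if_neg (fun h' => hne (le_antisymm h h'))]
    · rcases eq_or_ne j k with rfl | hne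
      · simp
      · rw [if_neg (fun h' => hne (le_antisymm h' h)), if_pos h]
  have hsne : ∀ j k (h : j ≠ k), w j (s j k) ≠ w k (s j k) := by
    intro j k h
    by_cases hle : j ≤ k
    · rw [show s j k = d j k from if_pos hle]
      exact hdne j k h
    · rw [show s j k = d k j from if_neg hle]
      exact fun hc => (hdne k j h.symm) hc.symm
  let S : Fin m → Finset (Fin t) := fun j => (Finset.univ.erase j).image (s j)
  let H : Fin m → Set (∀ i, V i) := fun j => {v | ∀ i ∈ S j, v i = w j i}
  have hsmem : ∀ j k, j ≠ k → s j k ∈ S j := by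
    intro j k h
    exact Finset.mem_image_of_mem _ (Finset.mem_erase.2 ⟨Ne.symm h, Finset.mem_univ _⟩)
  have hwH : ∀ j, w j ∈ H j := fun j i _ => rfl
  have hwnH : ∀ j k, j ≠ k → w k ∉ H j := by
    intro j k h hmem
    have h1 := hmem (s j k) (hsmem j k h)
    exact hsne j k h h1.symm
  refine ⟨H, ?_, ?_, ?_, ?_⟩
  · intro j k hjk
    rw [Set.disjoint_left]
    intro v hvj hvk
    have h1 := hvj (s j k) (hsmem j k hjk)
    have h2 := hvk (s k j) (hsmem k j hjk.symm)
    rw [← hssymm j k] at h2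
    exact hsne j k hjk (h1 ▸ h2)
  · intro j
    refine ⟨S j, w j, ?_, rfl⟩
    calc (S j).card ≤ (Finset.univ.erase j).card := Finset.card_image_le
      _ = m - 1 := by simp [Finset.card_erase_of_mem]
  · intro v hv
    refine ⟨e ⟨v, hv⟩, ?_, ?_⟩
    · show v ∈ H (e ⟨v, hv⟩)
      intro i _
      simp [w]
    · intro k hk
      by_contra hne
      have hvw : v = w (e ⟨v, hv⟩) := by simp [w]
      exact hwnH k (e ⟨v, hv⟩) hne (hvw ▸ hk)
  · intro j
    refine ⟨w j, ⟨hwM j, hwH j⟩, ?_⟩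
    rintro v ⟨hv, hvH⟩
    have hvw : v = w (e ⟨v, hv⟩) := by simp [w]
    rcases eq_or_ne (e ⟨v, hv⟩) j with h | h
    · rw [hvw, h]
    · exact absurd (hvw ▸ hvH) (hwnH j _ h.symm)
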